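/- For all natural numbers q, r ≥ 0, the intersection matrix of the star-shaped weighted tree Δ_{0,q,r} — which has a central vertex of weight −3 and three legs attached to it: a leg consisting of a single vertex of weight −2; a chain of q vertices of weight −2 followed by a terminal vertex of weight −(r+4); and a chain of r vertices of weight −2 followed by a terminal vertex of weight −(q+4) — is negative definite. -/

import Mathlib

abbrev StarVertex (m : ℕ) (n : Fin m → ℕ) : Type := Option ((i : Fin m) × Fin (n i))

def starMatrix (m : ℕ) (n : Fin m → ℕ) (w0 : ℤ) (w : Fin m → ℕ → ℤ) :
    Matrix (StarVertex m n) (StarVertex m n) ℤ :=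
  Matrix.of fun v v' =>
    match v, v' with
    | none, none => w0
    | none, some ⟨_, j⟩ => if (j : ℕ) = 0 then 1 else 0
    | some ⟨_, j⟩, none => if (j : ℕ) = 0 then 1 else 0
    | some ⟨i, j⟩, some ⟨i', j'⟩ =>
        if (i : ℕ) = (i' : ℕ) then
          if (j : ℕ) = (j' : ℕ) then w i (j : ℕ)
          else if (j : ℕ) + 1 = (j' : ℕ) ∨ (j' : ℕ) + 1 = (j : ℕ) then 1 else 0
        else 0

def chainW (k : ℕ) (a : ℤ) (j : ℕ) : ℤ := if j < k then -2 else -a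

/- ------------------ auxiliary lemmas ------------------ -/

theorem key {ι : Type*} [Fintype ι] (Q : ι → ι → ℝ)
    (hsym : ∀ i j, Q i j = Q j i) (hoff : ∀ i j, i ≠ j → 0 ≤ Q i j)
    (d : ι → ℝ) (hd : ∀ i, 0 < d i) (hQd : ∀ i, (∑ j, Q i j * d j) < 0) :
    ∀ x : ι → ℝ, x ≠ 0 → ∑ i, ∑ j, Q i j * x i * x j < 0 := by
  intro x hx
  set y : ι → ℝ := fun i => x i / d i with hy
  have hxy : ∀ i, x i = y i * d i := fun i => by
    rw [hy]; exact (div_mul_cancel₀ (x i) (hd i).ne').symm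
  obtain ⟨i0, hi0⟩ : ∃ i, x i ≠ 0 := by
    by_contra h; push_neg at h; exact hx (funext h)
  have hy0 : y i0 ≠ 0 := div_ne_zero hi0 (hd i0).ne'
  have hA : (∑ i, ∑ j, Q i j * d i * d j * (y j)^2)
      = ∑ i, ∑ j, Q i j * d i * d j * (y i)^2 := by
    rw [Finset.sum_comm]
    refine Finset.sum_congr rfl fun i _ => Finset.sum_congr rfl fun j _ => ?_
    rw [hsym j i]; ring
  have hT' : (∑ i, ∑ j, Q i j * d i * d j * (y i)^2)
      = ∑ i, (∑ j, Q i j * d j) * (d i * (y i)^2) := by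
    refine Finset.sum_congr rfl fun i _ => ?_
    rw [Finset.sum_mul]
    exact Finset.sum_congr rfl fun j _ => by ring
  have hR : 0 ≤ ∑ i, ∑ j, Q i j * d i * d j * (y i - y j)^2 := by
    refine Finset.sum_nonneg fun i _ => Finset.sum_nonneg fun j _ => ?_
    rcases eq_or_ne i j with rfl | h
    · simp
    · exact mul_nonneg (mul_nonneg (mul_nonneg (hoff i j h) (hd i).le) (hd j).le)
        (sq_nonneg _)
  have hT : (∑ i, (∑ j, Q i j * d j) * (d i * (y i)^2)) < 0 := by
    have : (∑ i : ι, (0:ℝ)) = 0 := by simp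
    rw [← this]
    refine Finset.sum_lt_sum (fun i _ => ?_) ⟨i0, Finset.mem_univ i0, ?_⟩
    · have h1 := hQd i
      have h2 : 0 ≤ d i * (y i)^2 := mul_nonneg (hd i).le (sq_nonneg _)
      nlinarith
    · have h2 : 0 < d i0 * (y i0)^2 :=
        mul_pos (hd i0) (by positivity)
      exact mul_neg_of_neg_of_pos (hQd i0) h2
  have expand : (∑ i, ∑ j, Q i j * x i * x j)
      = (∑ i, (∑ j, Q i j * d j) * (d i * (y i)^2))
        - (∑ i, ∑ j, Q i j * d i * d j * (y i - y j)^2) / 2 := by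
    have e1 : ∀ i j : ι, Q i j * d i * d j * (y i - y j)^2
        = Q i j * d i * d j * (y i)^2 + Q i j * d i * d j * (y j)^2
          - 2 * (Q i j * x i * x j) := by
      intro i j; rw [hxy i, hxy j]; ring
    simp only [e1, Finset.sum_sub_distrib, Finset.sum_add_distrib, hA, hT']
    have h2 : ∀ i j : ι, 2 * Q i j * x i * x j = 2 * (Q i j * x i * x j) := by
      intros; ring
    simp only [h2, ← Finset.mul_sum]
    ring
  rw [expand]
  linarith

theorem star_symm (m : ℕ) (n : Fin m → ℕ) (w0 : ℤ) (w : Fin m → ℕ → ℤ) :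
    ∀ v v', starMatrix m n w0 w v v' = starMatrix m n w0 w v' v := by
  rintro (_ | ⟨i, j⟩) (_ | ⟨i', j'⟩) <;> simp only [starMatrix, Matrix.of_apply]
  by_cases hii : (i : ℕ) = (i' : ℕ)
  · have hi : i = i' := Fin.ext hii
    subst hi
    by_cases hjj : (j : ℕ) = (j' : ℕ)
    · have : j = j' := Fin.ext hjj
      subst this; rfl
    · simp only [hii, if_true, hjj, Ne.symm hjj, if_false, if_neg]
      by_cases hor : (j : ℕ) + 1 = (j' : ℕ) ∨ (j' : ℕ) + 1 = (j : ℕ)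
      · rw [if_pos hor, if_pos (Or.symm hor)]
      · rw [if_neg hor, if_neg (fun h => hor (Or.symm h))]
  · rw [if_neg hii, if_neg (Ne.symm hii)]

theorem star_offdiag (m : ℕ) (n : Fin m → ℕ) (w0 : ℤ) (w : Fin m → ℕ → ℤ) :
    ∀ v v', v ≠ v' → 0 ≤ starMatrix m n w0 w v v' := by
  rintro (_ | ⟨i, j⟩) (_ | ⟨i', j'⟩) h <;> simp only [starMatrix, Matrix.of_apply]
  · exact absurd rfl h
  · split <;> norm_num
  · split <;> norm_num
  · by_cases hii : (i : ℕ) = (i' : ℕ)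
    · have hi : i = i' := Fin.ext hii
      subst hi
      by_cases hjj : (j : ℕ) = (j' : ℕ)
      · exact absurd (by rw [Fin.ext hjj]) h
      · rw [if_pos rfl, if_neg hjj]; split <;> norm_num
    · rw [if_neg hii]

/-- indicator sums over `Fin N` -/
theorem sum_fin_ite (N k : ℕ) (c : ℕ → ℝ) :
    (∑ j : Fin N, if (j : ℕ) = k then c (j : ℕ) else 0)
      = if k < N then c k else 0 := by
  rw [Fin.sum_univ_eq_sum_range (fun j => if j = k then c j else 0)]
  rw [Finset.sum_ite_eq' (Finset.range N) k c]
  simp [Finset.mem_range]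

/-- the `du` profile on a leg. -/
noncomputable def du (a : ℕ) (j : ℕ) : ℝ :=
  4*((a:ℝ)+2)^2 - ((j:ℝ)+1)*((a:ℝ)+2) - (j:ℝ)*((j:ℝ)+1)

theorem du_pos (a j : ℕ) (h : j ≤ a) : 0 < du a j := by
  have hj : (j:ℝ) ≤ (a:ℝ) := by exact_mod_cast h
  have hj0 : (0:ℝ) ≤ (j:ℝ) := Nat.cast_nonneg j
  unfold du; nlinarith

/-- the positive vector. -/
noncomputable def dd (q r : ℕ) : StarVertex 3 ![1, q + 1, r + 1] → ℝ
  | none => 16*((q:ℝ)+2)^2*((r:ℝ)+2)^2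
  | some ⟨i, j⟩ =>
      if (i : ℕ) = 0 then 12*((q:ℝ)+2)^2*((r:ℝ)+2)^2
      else if (i : ℕ) = 1 then 4*((r:ℝ)+2)^2 * du q (j : ℕ)
      else 4*((q:ℝ)+2)^2 * du r (j : ℕ)

theorem dd_pos (q r : ℕ) : ∀ v, 0 < dd q r v := by
  have hq : (0:ℝ) < ((q:ℝ)+2) := by positivity
  have hr : (0:ℝ) < ((r:ℝ)+2) := by positivity
  rintro (_ | ⟨i, j⟩)
  · unfold dd; positivity
  · fin_cases i <;> simp only [dd] <;> norm_num
    · positivity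
    · have hj : (j : ℕ) ≤ q := by
        have := j.isLt
        simp only [show ((fun (i : Fin 3) => i) (⟨1, by omega⟩ : Fin 3)) = 1 from rfl,
          Matrix.cons_val_one, Matrix.head_cons, Matrix.cons_val_zero] at this
        omega
      have := du_pos q (j : ℕ) hj
      positivity
    · have hj : (j : ℕ) ≤ r := by
        have := j.isLt
        simp only [show ((fun (i : Fin 3) => i) (⟨2, by omega⟩ : Fin 3)) = 2 from rfl,
          Matrix.cons_val_two, Matrix.tail_cons, Matrix.head_cons] at this
        omega
      have := du_pos r (j : ℕ) hj
      positivity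

theorem sum_star (q r : ℕ) (f : StarVertex 3 ![1, q+1, r+1] → ℝ) :
    ∑ v, f v = f none + ((∑ j : Fin 1, f (some ⟨0, j⟩))
      + (∑ j : Fin (q+1), f (some ⟨1, j⟩)) + ∑ j : Fin (r+1), f (some ⟨2, j⟩)) := by
  rw [Fintype.sum_option]
  congr 1
  rw [← Finset.univ_sigma_univ, Finset.sum_sigma, Fin.sum_univ_three]
  rfl

theorem leg_row (a jv : ℕ) (hj : jv ≤ a) (W : ℤ) (c : ℕ → ℝ) :
    (∑ j' : Fin (a+1), ((if jv = (j':ℕ) then W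
        else if jv + 1 = (j':ℕ) ∨ (j':ℕ) + 1 = jv then 1 else 0 : ℤ):ℝ) * c (j':ℕ))
      = (W:ℝ) * c jv + (if jv < a then c (jv+1) else 0)
        + (if 0 < jv then c (jv-1) else 0) := by
  rcases jv with _ | k
  · have point : ∀ j' : Fin (a+1),
        ((if 0 = (j':ℕ) then W
          else if 0 + 1 = (j':ℕ) ∨ (j':ℕ) + 1 = 0 then 1 else 0 : ℤ):ℝ) * c (j':ℕ)
        = (if (j':ℕ) = 0 then (W:ℝ) * c (j':ℕ) else 0)
          + (if (j':ℕ) = 1 then c (j':ℕ) else 0) := by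
      intro j'
      push_cast [apply_ite (fun z : ℤ => (z:ℝ)), or_false]
      split_ifs <;> first | (exfalso; omega) | ring1
    rw [Finset.sum_congr rfl fun j' _ => point j', Finset.sum_add_distrib,
      sum_fin_ite (a+1) 0 (fun t => (W:ℝ) * c t), sum_fin_ite (a+1) 1 c]
    simp only [show ((1:ℕ) < a+1) ↔ (0 < a) from by omega, Nat.succ_pos,
      lt_irrefl, if_true, if_neg (lt_irrefl 0)]
    simp
  · have hk1 : k + 1 < a + 1 := by omega
    have hk2 : k < a + 1 := by omega
    have point : ∀ j' : Fin (a+1),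
        ((if k + 1 = (j':ℕ) then W
          else if k + 1 + 1 = (j':ℕ) ∨ (j':ℕ) + 1 = k + 1 then 1 else 0 : ℤ):ℝ) * c (j':ℕ)
        = (if (j':ℕ) = k + 1 then (W:ℝ) * c (j':ℕ) else 0)
          + ((if (j':ℕ) = k + 2 then c (j':ℕ) else 0)
          + (if (j':ℕ) = k then c (j':ℕ) else 0)) := by
      intro j'
      push_cast [apply_ite (fun z : ℤ => (z:ℝ)), or_false]
      split_ifs <;> first | (exfalso; omega) | ring1
    rw [Finset.sum_congr rfl fun j' _ => point j', Finset.sum_add_distrib,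
      Finset.sum_add_distrib,
      sum_fin_ite (a+1) (k+1) (fun t => (W:ℝ) * c t),
      sum_fin_ite (a+1) (k+2) c, sum_fin_ite (a+1) k c]
    simp only [if_pos hk1, if_pos hk2,
      show (k+2 < a+1) ↔ (k+1 < a) from by omega, Nat.succ_pos, if_true]
    simp [Nat.succ_sub_one]
    ring

theorem leg_ineq (a b jv : ℕ) (hj : jv ≤ a) :
    (if jv = 0 then 16*((a:ℝ)+2)^2*((b:ℝ)+2)^2 else 0)
      + (((if jv < a then (-2:ℤ) else -((b:ℤ)+4) : ℤ):ℝ) * (4*((b:ℝ)+2)^2 * du a jv)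
        + (if jv < a then 4*((b:ℝ)+2)^2 * du a (jv+1) else 0)
        + (if 0 < jv then 4*((b:ℝ)+2)^2 * du a (jv-1) else 0)) < 0 := by
  have hb : (0:ℝ) ≤ (b:ℝ) := Nat.cast_nonneg b
  have ha : (0:ℝ) ≤ (a:ℝ) := Nat.cast_nonneg a
  have hB2 : (0:ℝ) < ((b:ℝ)+2)^2 := by positivity
  rcases jv with _ | k
  · rcases Nat.eq_zero_or_pos a with rfl | hpos
    · simp only [lt_irrefl, if_neg (lt_irrefl 0), if_pos rfl, du]
      push_cast
      nlinarith [mul_pos hB2 (show (0:ℝ) < 56*(b:ℝ)+160 by linarith)]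
    · simp only [if_pos rfl, if_pos hpos, if_neg (lt_irrefl 0), du]
      push_cast
      nlinarith
  · have hk : (0:ℝ) ≤ (k:ℝ) := Nat.cast_nonneg k
    have h0 : 0 < k + 1 := Nat.succ_pos k
    by_cases hlt : k + 1 < a
    · simp only [if_neg (Nat.succ_ne_zero k), if_pos hlt, if_pos h0, du]
      push_cast
      nlinarith
    · have heq : a = k + 1 := by omega
      subst heq
      simp only [if_neg (Nat.succ_ne_zero k), if_neg hlt, if_pos h0, du]
      have hfac : (0:ℝ) < ((b:ℝ)+4)*(2*(k:ℝ)^2+16*(k:ℝ)+28)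
          - (2*(k:ℝ)^2+19*(k:ℝ)+33) := by nlinarith
      push_cast
      nlinarith [mul_pos hB2 hfac]

theorem rows (q r : ℕ) : ∀ v : StarVertex 3 ![1,q+1,r+1],
    (∑ v', ((starMatrix 3 ![1,q+1,r+1] (-3)
      ![fun _ => -2, chainW q ((r:ℤ)+4), chainW r ((q:ℤ)+4)] v v' : ℤ):ℝ) * dd q r v') < 0 := by
  have hA : (0:ℝ) < (q:ℝ)+2 := by positivity
  have hB : (0:ℝ) < (r:ℝ)+2 := by positivity
  rintro (_ | ⟨i, j⟩)
  · show
      (∑ v', ((starMatrix 3 ![1,q+1,r+1] (-3)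
        ![fun _ => -2, chainW q ((r:ℤ)+4), chainW r ((q:ℤ)+4)] none v' : ℤ):ℝ) * dd q r v') < 0
    rw [sum_star q r]
    simp only [starMatrix, Matrix.of_apply, dd,
    show ((0:Fin 3):ℕ) = 0 from rfl, show ((1:Fin 3):ℕ) = 1 from rfl,
    show ((2:Fin 3):ℕ) = 2 from rfl]
    simp only [if_true, show ((1:ℕ) = 0) ↔ False from by norm_num,
    show ((2:ℕ) = 0) ↔ False from by norm_num, show ((2:ℕ) = 1) ↔ False from by norm_num,
    show ((0:ℕ) = 1) ↔ False from by norm_num, if_false]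
    push_cast [apply_ite (fun z : ℤ => (z:ℝ))]
    simp only [ite_mul, one_mul, zero_mul]
    rw [sum_fin_ite 1 0 (fun _ => 12*((q:ℝ)+2)^2*((r:ℝ)+2)^2),
      sum_fin_ite (q+1) 0 (fun t => 4*((r:ℝ)+2)^2 * du q t),
      sum_fin_ite (r+1) 0 (fun t => 4*((q:ℝ)+2)^2 * du r t)]
    norm_num [du]
    have hA : (0:ℝ) < (q:ℝ)+2 := by positivity
    have hB : (0:ℝ) < (r:ℝ)+2 := by positivity
    nlinarith [mul_pos (mul_pos hA hA) (mul_pos hB hB), mul_pos hA (mul_pos hB hB),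
    mul_pos (mul_pos hA hA) hB]

  · fin_cases i
    · have hj : (j:ℕ) = 0 := by
        have := j.isLt
        simp only [show ((fun (i : Fin 3) => i) (⟨0, by omega⟩ : Fin 3)) = 0 from rfl,
          Matrix.cons_val_zero] at this
        omega
      rw [sum_star q r]
      simp only [show ((fun (i : Fin 3) => i) (⟨0, by omega⟩ : Fin 3)) = 0 from rfl]
      simp only [starMatrix, Matrix.of_apply, dd, hj,
        show ((0:Fin 3):ℕ) = 0 from rfl, show ((1:Fin 3):ℕ) = 1 from rfl,
        show ((2:Fin 3):ℕ) = 2 from rfl]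
      simp only [show ((⟨0, by omega⟩ : Fin 3)) = 0 from rfl, Matrix.cons_val_zero, if_true,
        show ((0:ℕ) = 1) ↔ False from by norm_num, show ((1:ℕ) = 0) ↔ False from by norm_num,
        show ((0:ℕ) = 2) ↔ False from by norm_num, show ((2:ℕ) = 0) ↔ False from by norm_num,
        show ((2:ℕ) = 1) ↔ False from by norm_num, if_false,
        Int.cast_zero, zero_mul, Finset.sum_const_zero, Fin.sum_univ_one, Fin.val_zero]
      norm_num
      nlinarith [mul_pos (mul_pos hA hA) (mul_pos hB hB)]
    · -- i = 1
      have hj : (j:ℕ) ≤ q := by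
        have := j.isLt
        simp only [show ((fun (i : Fin 3) => i) (⟨1, by omega⟩ : Fin 3)) = 1 from rfl,
          Matrix.cons_val_one, Matrix.head_cons, Matrix.cons_val_zero] at this
        omega
      rw [sum_star q r]
      simp only [show ((fun (i : Fin 3) => i) (⟨1, by omega⟩ : Fin 3)) = 1 from rfl,
        show ((⟨1, by omega⟩ : Fin 3)) = 1 from rfl]
      simp only [starMatrix, Matrix.of_apply, dd,
        show ((0:Fin 3):ℕ) = 0 from rfl, show ((1:Fin 3):ℕ) = 1 from rfl,
        show ((2:Fin 3):ℕ) = 2 from rfl,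
        Matrix.cons_val_one, Matrix.head_cons, Matrix.cons_val_zero]
      simp only [show ((⟨1, by omega⟩ : Fin 3)) = 1 from rfl,
        Matrix.cons_val_one, Matrix.head_cons, Matrix.cons_val_zero, if_true,
        show ((1:ℕ) = 0) ↔ False from by norm_num,
        show ((1:ℕ) = 2) ↔ False from by norm_num,
        show ((0:ℕ) = 1) ↔ False from by norm_num,
        show ((2:ℕ) = 0) ↔ False from by norm_num,
        show ((2:ℕ) = 1) ↔ False from by norm_num, if_false,
        Int.cast_zero, zero_mul, Finset.sum_const_zero, add_zero, zero_add]
      rw [show (((if (j:ℕ) = 0 then 1 else 0 : ℤ):ℝ)) * (16*((q:ℝ)+2)^2*((r:ℝ)+2)^2)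
          = if (j:ℕ) = 0 then 16*((q:ℝ)+2)^2*((r:ℝ)+2)^2 else 0 from by
        split_ifs <;> norm_num]
      rw [leg_row q (j:ℕ) hj (chainW q ((r:ℤ)+4) (j:ℕ))
        (fun t => 4*((r:ℝ)+2)^2 * du q t)]
      simp only [chainW]
      linarith [leg_ineq q r (j:ℕ) hj]
    · -- i = 2
      have hj : (j:ℕ) ≤ r := by
        have := j.isLt
        simp only [show ((fun (i : Fin 3) => i) (⟨2, by omega⟩ : Fin 3)) = 2 from rfl,
          Matrix.cons_val_two, Matrix.tail_cons, Matrix.head_cons] at this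
        omega
      rw [sum_star q r]
      simp only [show ((fun (i : Fin 3) => i) (⟨2, by omega⟩ : Fin 3)) = 2 from rfl,
        show ((⟨2, by omega⟩ : Fin 3)) = 2 from rfl]
      simp only [starMatrix, Matrix.of_apply, dd,
        show ((0:Fin 3):ℕ) = 0 from rfl, show ((1:Fin 3):ℕ) = 1 from rfl,
        show ((2:Fin 3):ℕ) = 2 from rfl,
        Matrix.cons_val_two, Matrix.tail_cons, Matrix.head_cons]
      simp only [show ((⟨2, by omega⟩ : Fin 3)) = 2 from rfl,
        Matrix.cons_val_two, Matrix.tail_cons, Matrix.head_cons, if_true,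
        show ((2:ℕ) = 0) ↔ False from by norm_num,
        show ((2:ℕ) = 1) ↔ False from by norm_num,
        show ((0:ℕ) = 1) ↔ False from by norm_num,
        show ((1:ℕ) = 0) ↔ False from by norm_num, if_false,
        Int.cast_zero, zero_mul, Finset.sum_const_zero, add_zero, zero_add]
      rw [show (((if (j:ℕ) = 0 then 1 else 0 : ℤ):ℝ)) * (16*((q:ℝ)+2)^2*((r:ℝ)+2)^2)
          = if (j:ℕ) = 0 then 16*((r:ℝ)+2)^2*((q:ℝ)+2)^2 else 0 from by
        split_ifs <;> [ring; norm_num]]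
      rw [leg_row r (j:ℕ) hj (chainW r ((q:ℤ)+4) (j:ℕ))
        (fun t => 4*((q:ℝ)+2)^2 * du r t)]
      simp only [chainW]
      linarith [leg_ineq r q (j:ℕ) hj]

/-- The intersection matrix of the star-shaped weighted tree `Δ_{0,q,r}` (central vertex of
weight `-3`; legs: a single vertex of weight `-2`; `q` vertices of weight `-2` then `-(r+4)`;
`r` vertices of weight `-2` then `-(q+4)`) is negative definite. -/
theorem Delta_0qr_negative_definite (q r : ℕ) :
    ∀ x : StarVertex 3 ![1, q + 1, r + 1] → ℝ, x ≠ 0 →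
      ∑ v, ∑ v', ((starMatrix 3 ![1, q + 1, r + 1] (-3)
          ![fun _ => -2,
            chainW q ((r : ℤ) + 4),
            chainW r ((q : ℤ) + 4)] v v' : ℤ) : ℝ)
          * x v * x v' < 0 := by
  intro x hx
  exact key (fun v v' => ((starMatrix 3 ![1, q + 1, r + 1] (-3)
      ![fun _ => -2, chainW q ((r : ℤ) + 4), chainW r ((q : ℤ) + 4)] v v' : ℤ) : ℝ))
    (fun v v' => by rw [star_symm])
    (fun v v' h => by
      have := star_offdiag 3 ![1, q + 1, r + 1] (-3)
        ![fun _ => -2, chainW q ((r : ℤ) + 4), chainW r ((q : ℤ) + 4)] v v' h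
      exact_mod_cast this)
    (dd q r) (dd_pos q r) (rows q r) x hx
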